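/- Let C := {n : ℕ | Th(M_n) is consistent}. Suppose F : ℕ →. ℕ is a partial computable function such that C ⊆ dom(F) and for every n ∈ C, F(n) ∉ W_n (i.e. F(n) is not the code of any sentence of Th(M_n)). Then the theory {φ : ring sentence | encode φ is a value of F} is inconsistent, i.e. not satisfiable. -/

import Mathlib

open FirstOrder Language

/-- Sentences of the language of rings are countable. -/
instance : Countable (Σ n, Language.ring.BoundedFormula Empty n) :=
  Language.BoundedFormula.listEncode_sigma_injective.countable

instance : Countable Language.ring.Sentence :=
  Function.Injective.countable
    (f := fun φ : Language.ring.Sentence =>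
      (⟨0, φ⟩ : Σ n, Language.ring.BoundedFormula Empty n))
    (fun _ _ h => by simpa using h)

/-- Gödel numbering of ring sentences. -/
noncomputable instance : Encodable Language.ring.Sentence :=
  Encodable.ofCountable _

/-- `W e` is the domain of the `e`-th partial computable function: the `e`-th
computably enumerable set. -/
def W (e : ℕ) : Set ℕ := {x : ℕ | ((Denumerable.ofNat Nat.Partrec.Code e).eval x).Dom}

/-- `ThM e` is the theory (set of ring sentences) produced by the `e`-th Turing machine. -/
noncomputable def ThM (e : ℕ) : Language.ring.Theory :=
  {φ : Language.ring.Sentence | Encodable.encode φ ∈ W e}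

/-- The range of a partial computable function is a c.e. set. -/
lemma range_eq_W {F : ℕ →. ℕ} (hF : Partrec F) :
    ∃ e : ℕ, ∀ m : ℕ, (∃ n, m ∈ F n) ↔ m ∈ W e := by
  obtain ⟨c, hc⟩ := Nat.Partrec.Code.exists_code.1 (Partrec.nat_iff.1 hF)
  set f : ℕ → ℕ → Option ℕ := fun m k =>
    (Nat.Partrec.Code.evaln k.unpair.2 c k.unpair.1).bind
      fun v => if v = m then some 0 else none with hf
  have hfc : Computable₂ f := by
    apply Computable.option_bind
    · exact (Nat.Partrec.Code.primrec_evaln.comp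
        (((Primrec.snd.comp (Primrec.unpair.comp Primrec.snd)).pair
          (Primrec.const c)).pair
          (Primrec.fst.comp (Primrec.unpair.comp Primrec.snd)))).to_comp
    · exact (Primrec.ite (Primrec.eq.comp Primrec.snd (Primrec.fst.comp Primrec.fst))
        (Primrec.const (some 0)) (Primrec.const none)).to_comp
  have hG : Partrec fun m => Nat.rfindOpt (f m) := Partrec.rfindOpt hfc
  obtain ⟨c', hc'⟩ := Nat.Partrec.Code.exists_code.1 (Partrec.nat_iff.1 hG)
  refine ⟨Encodable.encode c', fun m => ?_⟩
  have : (Denumerable.ofNat Nat.Partrec.Code (Encodable.encode c')) = c' := by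
    simp
  simp only [W, Set.mem_setOf_eq, this, hc']
  rw [Nat.rfindOpt_dom]
  constructor
  · rintro ⟨n, hn⟩
    rw [← hc] at hn
    obtain ⟨k, hk⟩ := Nat.Partrec.Code.evaln_complete.1 hn
    exact ⟨Nat.pair n k, 0, by
      simp only [Option.mem_def] at hk
      simp [hf, hk]⟩
  · rintro ⟨k, a, ha⟩
    simp only [hf, Option.mem_def, Option.bind_eq_some_iff] at ha
    obtain ⟨v, hv, hvm⟩ := ha
    split_ifs at hvm with h
    · subst h
      exact ⟨k.unpair.1, by rw [← hc]; exact Nat.Partrec.Code.evaln_sound hv⟩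

theorem stmt_1 (C : Set ℕ) (hC : C = {n : ℕ | (ThM n).IsSatisfiable})
    (F : ℕ →. ℕ) (hF : Partrec F)
    (hdom : C ⊆ {n : ℕ | (F n).Dom})
    (hdiag : ∀ n ∈ C, ∀ m ∈ F n, m ∉ W n) :
    ¬ Theory.IsSatisfiable
      {φ : Language.ring.Sentence | ∃ n, (Encodable.encode φ : ℕ) ∈ F n} := by
  intro hsat
  obtain ⟨e, he⟩ := range_eq_W hF
  have hTh : ThM e = {φ : Language.ring.Sentence | ∃ n, (Encodable.encode φ : ℕ) ∈ F n} := by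
    ext φ; exact (he (Encodable.encode φ)).symm
  have heC : e ∈ C := by rw [hC]; exact Set.mem_setOf_eq ▸ (hTh ▸ hsat)
  have hd : (F e).Dom := hdom heC
  have hm : (F e).get hd ∈ F e := Part.get_mem hd
  exact hdiag e heC _ hm ((he _).1 ⟨e, hm⟩)
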